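/- Let V, W be real vector spaces, π : V → W a surjective linear map with kernel K, and ω¹,…,ωᵏ skew-symmetric bilinear forms on V. Let S ⊆ (V*)ᵏ be a subspace invariant in the sense of the reduction setup, and suppose the pointwise reduction hypotheses hold: (i) Im(ω̄♭) ∩ (K°)ᵏ is a subspace, and (ii) (ω̄♭)⁻¹((K^⊥)°ᵏ ∩ (K°)ᵏ ∩ Im(ω̄♭)) ⊆ K, where K^⊥ = ⋂_A (ωᴬ♭)⁻¹(K°). Define Ŝ = {ᾱ ∈ (W*)ᵏ : (π*)ᵏ(ᾱ) ∈ Im(ω̄♭)} and Λ̂♯(ᾱ) = π((ω̄♭)⁻¹((π*)ᵏ(ᾱ))) for ᾱ ∈ Ŝ (assuming ω̄♭ is injective). Then Λ̂♯ is well defined, ᾱ(Λ̂♯(ᾱ)) = 0 for all ᾱ ∈ Ŝ, and if ᾱ ∈ Ŝ satisfies ᾱ(Λ̂♯(β̄)) = 0 for all β̄ ∈ Ŝ then Λ̂♯(ᾱ) = 0. -/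

import Mathlib

/-- pointwise content of polysymplectic reduction, Theorem 4.1:
with π : V → W surjective, K = Ker π, ω̄♭ injective, and hypothesis (ii)
(ω̄♭)⁻¹((K^⊥)°ᵏ ∩ (K°)ᵏ ∩ Im ω̄♭) ⊆ K, the reduced map
Λ̂♯(ᾱ) = π((ω̄♭)⁻¹((π*)ᵏᾱ)) on Ŝ = {ᾱ : (π*)ᵏᾱ ∈ Im ω̄♭} is well defined and
satisfies axioms (i) and (ii) of a poly-Poisson structure. -/
theorem stmt_17 (V W : Type*) [AddCommGroup V] [Module ℝ V] [FiniteDimensional ℝ V]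
    [AddCommGroup W] [Module ℝ W] [FiniteDimensional ℝ W]
    (π : V →ₗ[ℝ] W) (hπ : Function.Surjective π) (k : ℕ)
    (ω : Fin k → LinearMap.BilinForm ℝ V)
    (hskew : ∀ A (x y : V), ω A x y = - ω A y x)
    -- ω̄♭ is injective
    (hinj : ∀ v v' : V, (∀ A, ω A v = ω A v') → v = v')
    -- hypothesis (ii): (ω̄♭)⁻¹((K^⊥)°ᵏ ∩ (K°)ᵏ ∩ Im ω̄♭) ⊆ K
    (hii : ∀ v : V,
      (∀ A, ∀ x : V, π x = 0 → ω A v x = 0) →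
      (∀ A, ∀ u : V, (∀ B, ∀ x : V, π x = 0 → ω B u x = 0) → ω A v u = 0) →
      π v = 0) :
    -- Λ̂♯ is well defined
    (∀ v v' : V, (∀ A, ω A v = ω A v') → π v = π v') ∧
    -- axiom (i): ᾱ(Λ̂♯ᾱ) = 0 for ᾱ ∈ Ŝ with (π*)ᵏᾱ = ω̄♭(v)
    (∀ (α : Fin k → Module.Dual ℝ W) (v : V),
      (∀ A, (α A).comp π = ω A v) → ∀ A, α A (π v) = 0) ∧
    -- axiom (ii): if ᾱ(Λ̂♯β̄) = 0 for every β̄ ∈ Ŝ then Λ̂♯ᾱ = 0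
    (∀ (α : Fin k → Module.Dual ℝ W) (v : V),
      (∀ A, (α A).comp π = ω A v) →
      (∀ (β : Fin k → Module.Dual ℝ W) (w : V),
        (∀ A, (β A).comp π = ω A w) → ∀ A, α A (π w) = 0) →
      π v = 0) := by
  refine ⟨fun v v' h => by rw [hinj v v' h], ?_, ?_⟩
  · intro α v hα A
    have := congrArg (fun f => f v) (hα A)
    simp only [LinearMap.comp_apply] at this
    have h0 : ω A v v = 0 := by
      have := hskew A v v; linarith
    rw [this, h0]
  · intro α v hα hβ
    apply hii v
    · intro A x hx
      have := congrArg (fun f => f x) (hα A)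
      simp only [LinearMap.comp_apply] at this
      rw [← this, hx, map_zero]
    · intro A u hu
      -- construct β with (β B).comp π = ω B u, using a linear section of π
      obtain ⟨s, hs⟩ := π.exists_rightInverse_of_surjective
        (LinearMap.range_eq_top.mpr hπ)
      have hsec : ∀ y : W, π (s y) = y := fun y =>
        congrArg (fun f => f y) hs
      set β : Fin k → Module.Dual ℝ W := fun B => (ω B u).comp s with hβdef
      have hβS : ∀ B, (β B).comp π = ω B u := by
        intro B
        ext x
        simp only [hβdef, LinearMap.comp_apply]
        have hker : π (s (π x) - x) = 0 := by
          rw [map_sub, hsec, sub_self]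
        have := hu B _ hker
        rw [map_sub] at this
        linarith
      have := hβ β u hβS A
      have hv := congrArg (fun f => f u) (hα A)
      simp only [LinearMap.comp_apply] at hv
      rw [← hv]; exact this
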